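/- Every point of the half-open cube [0,m)^d lies in exactly one t-block of 𝓑 for each t ∈ T, and consequently the clique number of G equals |T| = C(k+d−1, d−1). -/
import Mathlib


open scoped Classical

noncomputable section

/-- The `t`-block `B_t(p) = ∏_i [s^{t i}·p i, s^{t i}·(p i + 1))`. -/
def block (d s : ℕ) (t : Fin d → ℕ) (p : Fin d → ℤ) : Set (Fin d → ℝ) :=
  Set.univ.pi fun i =>
    Set.Ico ((s : ℝ) ^ t i * (p i : ℝ)) ((s : ℝ) ^ t i * ((p i : ℝ) + 1))

/-- The family `𝓑` of all `t`-blocks with `∑ t i = k` contained in `[0, s^k]^d`. -/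
def blockFamily (d s k : ℕ) : Set (Set (Fin d → ℝ)) :=
  {B | ∃ t : Fin d → ℕ, ∃ p : Fin d → ℤ, (∑ i, t i) = k ∧
    (∀ i, 0 ≤ p i ∧ p i < (s : ℤ) ^ (k - t i)) ∧ B = block d s t p}

lemma mem_block_iff {d s : ℕ} {t : Fin d → ℕ} {p : Fin d → ℤ} {x : Fin d → ℝ} :
    x ∈ block d s t p ↔
      ∀ i, (s : ℝ) ^ t i * (p i : ℝ) ≤ x i ∧ x i < (s : ℝ) ^ t i * ((p i : ℝ) + 1) := by
  simp [block, Set.mem_pi]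

lemma cell_unique {c x : ℝ} (hc : 0 < c) {p q : ℤ}
    (h1 : c * p ≤ x) (h2 : x < c * (p + 1)) (h3 : c * q ≤ x) (h4 : x < c * (q + 1)) :
    p = q := by
  have hpq : (p : ℝ) < (q : ℝ) + 1 := by
    have := h1.trans_lt h4
    exact (mul_lt_mul_iff_right₀ hc).mp this
  have hqp : (q : ℝ) < (p : ℝ) + 1 := by
    have := h3.trans_lt h2
    exact (mul_lt_mul_iff_right₀ hc).mp this
  have h1' : p < q + 1 := by exact_mod_cast hpq
  have h2' : q < p + 1 := by exact_mod_cast hqp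
  omega

lemma le_of_block0_subset {d s : ℕ} (hs : 2 ≤ s) {t t' : Fin d → ℕ}
    (h : block d s t 0 ⊆ block d s t' 0) (i : Fin d) : t i ≤ t' i := by
  by_contra hlt
  push_neg at hlt
  have hs1 : (1 : ℝ) < (s : ℝ) := by exact_mod_cast lt_of_lt_of_le one_lt_two hs
  set x : Fin d → ℝ := fun j => if j = i then (s : ℝ) ^ t' i else 0 with hx
  have hxmem : x ∈ block d s t 0 := by
    rw [mem_block_iff]
    intro j
    by_cases hj : j = i
    · subst hj
      simp only [hx, if_pos rfl, Pi.zero_apply, Int.cast_zero, mul_zero, zero_add, mul_one]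
      exact ⟨pow_nonneg (by positivity) _, pow_lt_pow_right₀ hs1 hlt⟩
    · simp only [hx, if_neg hj, Pi.zero_apply, Int.cast_zero, mul_zero, zero_add, mul_one]
      exact ⟨le_refl _, pow_pos (by positivity) _⟩
  have := (mem_block_iff.mp (h hxmem)) i
  simp only [hx, if_pos rfl, Pi.zero_apply, Int.cast_zero, mul_zero, zero_add, mul_one] at this
  exact absurd this.2 (lt_irrefl _)

lemma block0_injective {d s : ℕ} (hs : 2 ≤ s) :
    Function.Injective (fun t : Fin d → ℕ => block d s t 0) := by
  intro t t' h
  funext i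
  exact le_antisymm (le_of_block0_subset hs h.le i) (le_of_block0_subset hs h.ge i)

/-- Every point of `[0, s^k)^d` lies in exactly one `t`-block of `𝓑` for each `t ∈ T`,
and consequently the clique number of the intersection graph of `𝓑` equals
`|T| = C(k+d-1, d-1)`: there is a pairwise intersecting subfamily of that size, and
every pairwise intersecting subfamily has at most that many members. -/
theorem clique_number_of_blockFamily (d s k : ℕ) (hd : 2 ≤ d) (hs : 2 ≤ s) (hk : 1 ≤ k) :
    (∀ x : Fin d → ℝ, (∀ i, 0 ≤ x i ∧ x i < (s : ℝ) ^ k) →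
      ∀ t : Fin d → ℕ, (∑ i, t i) = k →
        ∃! p : Fin d → ℤ,
          (∀ i, 0 ≤ p i ∧ p i < (s : ℤ) ^ (k - t i)) ∧ x ∈ block d s t p) ∧
    (∃ S : Finset (Set (Fin d → ℝ)), ↑S ⊆ blockFamily d s k ∧
      S.card = (k + d - 1).choose (d - 1) ∧
      ((↑S : Set (Set (Fin d → ℝ))).Pairwise fun B B' => (B ∩ B').Nonempty)) ∧
    (∀ S : Finset (Set (Fin d → ℝ)), ↑S ⊆ blockFamily d s k →
      ((↑S : Set (Set (Fin d → ℝ))).Pairwise fun B B' => (B ∩ B').Nonempty) →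
      S.card ≤ (k + d - 1).choose (d - 1)) := by
  have hs0 : (0 : ℝ) < (s : ℝ) := by positivity
  haveI : Fintype {P : Fin d → ℕ // ∑ i, P i = k} :=
    Fintype.ofEquiv _ (Sym.equivNatSumOfFintype (Fin d) k)
  have hcard : Fintype.card {P : Fin d → ℕ // ∑ i, P i = k} = (k + d - 1).choose (d - 1) := by
    rw [← Fintype.card_congr (Sym.equivNatSumOfFintype (Fin d) k), Sym.card_sym_eq_choose,
      Fintype.card_fin, add_comm d k]
    have hk' : k ≤ k + d - 1 := by omega
    rw [← Nat.choose_symm hk']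
    congr 1
    omega
  refine ⟨?_, ?_, ?_⟩
  · -- Part 1: unique block per point and per t
    intro x hx t ht
    have htk : ∀ i, t i ≤ k := by
      intro i
      rw [← ht]
      exact Finset.single_le_sum (fun j _ => Nat.zero_le _) (Finset.mem_univ i)
    set p : Fin d → ℤ := fun i => ⌊x i / (s : ℝ) ^ t i⌋ with hp
    have hcpos : ∀ i, (0 : ℝ) < (s : ℝ) ^ t i := fun i => pow_pos hs0 _
    refine ⟨p, ⟨?_, ?_⟩, ?_⟩
    · intro i
      constructor
      · exact Int.floor_nonneg.mpr (div_nonneg (hx i).1 (hcpos i).le)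
      · rw [hp]
        apply Int.floor_lt.mpr
        rw [div_lt_iff₀ (hcpos i)]
        push_cast
        calc x i < (s : ℝ) ^ k := (hx i).2
          _ = (s : ℝ) ^ (k - t i) * (s : ℝ) ^ t i := by
              rw [← pow_add, Nat.sub_add_cancel (htk i)]
    · rw [mem_block_iff]
      intro i
      constructor
      · calc (s : ℝ) ^ t i * (p i : ℝ) ≤ (s : ℝ) ^ t i * (x i / (s : ℝ) ^ t i) :=
              mul_le_mul_of_nonneg_left (Int.floor_le _) (hcpos i).le
          _ = x i := by field_simp
      · calc x i = (s : ℝ) ^ t i * (x i / (s : ℝ) ^ t i) := by field_simp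
          _ < (s : ℝ) ^ t i * ((p i : ℝ) + 1) :=
              mul_lt_mul_of_pos_left (Int.lt_floor_add_one _) (hcpos i)
    · rintro q ⟨-, hq⟩
      rw [mem_block_iff] at hq
      funext i
      have hpi : (s : ℝ) ^ t i * (p i : ℝ) ≤ x i ∧ x i < (s : ℝ) ^ t i * ((p i : ℝ) + 1) := by
        constructor
        · calc (s : ℝ) ^ t i * (p i : ℝ) ≤ (s : ℝ) ^ t i * (x i / (s : ℝ) ^ t i) :=
              mul_le_mul_of_nonneg_left (Int.floor_le _) (hcpos i).le
            _ = x i := by field_simp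
        · calc x i = (s : ℝ) ^ t i * (x i / (s : ℝ) ^ t i) := by field_simp
            _ < (s : ℝ) ^ t i * ((p i : ℝ) + 1) :=
              mul_lt_mul_of_pos_left (Int.lt_floor_add_one _) (hcpos i)
      exact cell_unique (hcpos i) (hq i).1 (by push_cast; exact (hq i).2) hpi.1
        (by push_cast; exact hpi.2)
  · -- Part 2: a clique of the right size
    refine ⟨Finset.univ.image
      (fun q : {P : Fin d → ℕ // ∑ i, P i = k} => block d s q.val 0), ?_, ?_, ?_⟩
    · intro B hB
      simp only [Finset.coe_image, Set.mem_image, Finset.mem_coe, Finset.mem_univ] at hB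
      obtain ⟨q, -, rfl⟩ := hB
      exact ⟨q.val, 0, q.prop, fun i => ⟨le_refl _, pow_pos (by positivity) _⟩, rfl⟩
    · rw [Finset.card_image_of_injective _
        (fun a b hab => Subtype.ext (block0_injective hs hab)),
        Finset.card_univ, hcard]
    · intro B hB B' hB' _
      simp only [Finset.coe_image, Set.mem_image, Finset.mem_coe, Finset.mem_univ] at hB hB'
      obtain ⟨q, -, rfl⟩ := hB
      obtain ⟨q', -, rfl⟩ := hB'
      refine ⟨0, ?_, ?_⟩ <;>
      · rw [mem_block_iff]
        intro i
        simp only [Pi.zero_apply, Int.cast_zero, mul_zero, zero_add, mul_one]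
        exact ⟨le_refl _, pow_pos (by positivity) _⟩
  · -- Part 3: every clique has at most |T| members
    intro S hsub hpair
    have hchoose : ∀ B ∈ S, ∃ t : Fin d → ℕ, ∃ p : Fin d → ℤ, (∑ i, t i) = k ∧
        (∀ i, 0 ≤ p i ∧ p i < (s : ℤ) ^ (k - t i)) ∧ B = block d s t p :=
      fun B hB => hsub hB
    choose t p hsum hbnd hblk using hchoose
    rw [← Fintype.card_coe S, ← hcard]
    apply Fintype.card_le_of_injective
      (fun B : ↥S => (⟨t B.val B.prop, hsum B.val B.prop⟩ : {P : Fin d → ℕ // ∑ i, P i = k}))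
    rintro ⟨B, hB⟩ ⟨B', hB'⟩ hEq
    have hteq : t B hB = t B' hB' := congrArg Subtype.val hEq
    by_cases hne : B = B'
    · exact Subtype.ext hne
    · exfalso
      obtain ⟨x, hx1, hx2⟩ := hpair hB hB' hne
      rw [hblk B hB, mem_block_iff] at hx1
      rw [hblk B' hB', mem_block_iff] at hx2
      have hpp : p B hB = p B' hB' := by
        funext i
        have hc : (0 : ℝ) < (s : ℝ) ^ (t B hB) i := pow_pos hs0 _
        have h2 := hx2 i
        rw [← hteq] at h2
        exact cell_unique hc (hx1 i).1 (hx1 i).2 h2.1 h2.2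
      exact hne ((hblk B hB).trans (by rw [hteq, hpp, ← hblk B' hB']))
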